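/- Consider the equilateral triangle with vertices A = (0,0), B = (1,0), C = (1/2, √3/2). Subdivide it using the parameters α = β = γ = 1 - √3/3 and interior point M = (1/3)(B) + (1/3)(C) as in the construction: C' = α·B on edge AB, A' = (1-γ)B + γC on edge BC, B' = (1-β)C on edge CA, and M = ξB + ηC with ξ = η = 1/3. Then the three quadrangles AC'MB', BA'MC', CB'MA' each have area (√3/4)/3 and each have perimeter 1 + √2 - √6/3. -/

import Mathlib

set_option maxHeartbeats 1000000


/-- Perimeter of a quadrangle with vertices p, q, r, s in cyclic order. -/
noncomputable def quadPerimeter (p q r s : EuclideanSpace ℝ (Fin 2)) : ℝ :=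
  dist p q + dist q r + dist r s + dist s p

/-- Area (shoelace formula) of a quadrangle with vertices p, q, r, s in cyclic order. -/
noncomputable def quadArea (p q r s : EuclideanSpace ℝ (Fin 2)) : ℝ :=
  (1/2) * |(p 0 * q 1 - q 0 * p 1) + (q 0 * r 1 - r 0 * q 1) +
            (r 0 * s 1 - s 0 * r 1) + (s 0 * p 1 - p 0 * s 1)|

/-- the three quadrangles of the fair subdivision of the unit equilateral
triangle all have area (√3/4)/3 and perimeter 1 + √2 - √6/3. -/
theorem stmt_13
    (A B C C' A' B' M : EuclideanSpace ℝ (Fin 2))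
    (hA : A = !₂[0, 0]) (hB : B = !₂[1, 0]) (hC : C = !₂[1/2, Real.sqrt 3 / 2])
    (hC' : C' = (1 - Real.sqrt 3 / 3) • B)
    (hA' : A' = (1 - (1 - Real.sqrt 3 / 3)) • B + (1 - Real.sqrt 3 / 3) • C)
    (hB' : B' = (1 - (1 - Real.sqrt 3 / 3)) • C)
    (hM : M = (1/3 : ℝ) • B + (1/3 : ℝ) • C) :
    (quadArea A C' M B' = (Real.sqrt 3 / 4) / 3 ∧
     quadArea B A' M C' = (Real.sqrt 3 / 4) / 3 ∧
     quadArea C B' M A' = (Real.sqrt 3 / 4) / 3) ∧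
    (quadPerimeter A C' M B' = 1 + Real.sqrt 2 - Real.sqrt 6 / 3 ∧
     quadPerimeter B A' M C' = 1 + Real.sqrt 2 - Real.sqrt 6 / 3 ∧
     quadPerimeter C B' M A' = 1 + Real.sqrt 2 - Real.sqrt 6 / 3) := by
  set s := Real.sqrt 3 with hsdef
  set t := Real.sqrt 2 with htdef
  have hs : s ^ 2 = 3 := Real.sq_sqrt (by norm_num)
  have ht : t ^ 2 = 2 := Real.sq_sqrt (by norm_num)
  have hs0 : 0 ≤ s := Real.sqrt_nonneg 3
  have ht0 : 0 ≤ t := Real.sqrt_nonneg 2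
  have hs2 : s ≤ 2 := by
    rw [hsdef, show (2:ℝ) = Real.sqrt 4 by rw [show (4:ℝ) = 2^2 by norm_num, Real.sqrt_sq]; norm_num]
    exact Real.sqrt_le_sqrt (by norm_num)
  have h6 : Real.sqrt 6 = t * s := by
    rw [htdef, hsdef, ← Real.sqrt_mul (by norm_num)]; norm_num
  have hv0 : 0 ≤ t/2 - t*s/6 := by nlinarith [mul_nonneg ht0 (sub_nonneg.mpr hs2), ht0]
  have h1s : (0:ℝ) ≤ 1 - s/3 := by linarith
  -- coordinates
  have cS : ∀ i, ∀ c : ℝ, ∀ x : EuclideanSpace ℝ (Fin 2), (c • x) i = c * x i := fun _ _ _ => rfl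
  have cP : ∀ i, ∀ x y : EuclideanSpace ℝ (Fin 2), (x + y) i = x i + y i := fun _ _ _ => rfl
  have cA0 : A 0 = 0 := by rw [hA]; rfl
  have cA1 : A 1 = 0 := by rw [hA]; rfl
  have cB0 : B 0 = 1 := by rw [hB]; rfl
  have cB1 : B 1 = 0 := by rw [hB]; rfl
  have cC0 : C 0 = 1/2 := by rw [hC]; rfl
  have cC1 : C 1 = s/2 := by rw [hC]; rfl
  have cC'0 : C' 0 = 1 - s/3 := by rw [hC', cS, cB0]; ring
  have cC'1 : C' 1 = 0 := by rw [hC', cS, cB1]; ring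
  have cA'0 : A' 0 = 1/2 + s/6 := by rw [hA', cP, cS, cS, cB0, cC0]; ring
  have cA'1 : A' 1 = s/2 - 1/2 := by
    rw [hA', cP, cS, cS, cB1, cC1]; linear_combination (-1/6) * hs
  have cB'0 : B' 0 = s/6 := by rw [hB', cS, cC0]; ring
  have cB'1 : B' 1 = 1/2 := by rw [hB', cS, cC1]; linear_combination (1/6) * hs
  have cM0 : M 0 = 1/2 := by rw [hM, cP, cS, cS, cB0, cC0]; ring
  have cM1 : M 1 = s/6 := by rw [hM, cP, cS, cS, cB1, cC1]; ring
  have key : ∀ x y : EuclideanSpace ℝ (Fin 2),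
      dist x y = Real.sqrt ((x 0 - y 0)^2 + (x 1 - y 1)^2) := by
    intro x y
    rw [EuclideanSpace.dist_eq, Fin.sum_univ_two, Real.dist_eq, Real.dist_eq, sq_abs, sq_abs]
  -- the twelve distances
  have dAC' : dist A C' = 1 - s/3 := by
    rw [key, cA0, cA1, cC'0, cC'1, Real.sqrt_eq_cases]
    exact Or.inl ⟨by ring, h1s⟩
  have dC'M : dist C' M = t/2 - t*s/6 := by
    rw [key, cC'0, cC'1, cM0, cM1, Real.sqrt_eq_cases]
    exact Or.inl ⟨by linear_combination (1/4 - s/6 + s^2/36) * ht - (1/12) * hs, hv0⟩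
  have dMB' : dist M B' = t/2 - t*s/6 := by
    rw [key, cM0, cM1, cB'0, cB'1, Real.sqrt_eq_cases]
    exact Or.inl ⟨by linear_combination (1/4 - s/6 + s^2/36) * ht, hv0⟩
  have dB'A : dist B' A = s/3 := by
    rw [key, cB'0, cB'1, cA0, cA1, Real.sqrt_eq_cases]
    exact Or.inl ⟨by linear_combination (1/12) * hs, by positivity⟩
  have dBA' : dist B A' = 1 - s/3 := by
    rw [key, cB0, cB1, cA'0, cA'1, Real.sqrt_eq_cases]
    exact Or.inl ⟨by linear_combination (-1/6) * hs, h1s⟩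
  have dA'M : dist A' M = t/2 - t*s/6 := by
    rw [key, cA'0, cA'1, cM0, cM1, Real.sqrt_eq_cases]
    exact Or.inl ⟨by linear_combination (1/4 - s/6 + s^2/36) * ht - (1/12) * hs, hv0⟩
  have dMC' : dist M C' = t/2 - t*s/6 := by
    rw [key, cM0, cM1, cC'0, cC'1, Real.sqrt_eq_cases]
    exact Or.inl ⟨by linear_combination (1/4 - s/6 + s^2/36) * ht - (1/12) * hs, hv0⟩
  have dC'B : dist C' B = s/3 := by
    rw [key, cC'0, cC'1, cB0, cB1, Real.sqrt_eq_cases]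
    exact Or.inl ⟨by ring, by positivity⟩
  have dCB' : dist C B' = 1 - s/3 := by
    rw [key, cC0, cC1, cB'0, cB'1, Real.sqrt_eq_cases]
    exact Or.inl ⟨by linear_combination (-1/6) * hs, h1s⟩
  have dB'M : dist B' M = t/2 - t*s/6 := by
    rw [key, cB'0, cB'1, cM0, cM1, Real.sqrt_eq_cases]
    exact Or.inl ⟨by linear_combination (1/4 - s/6 + s^2/36) * ht, hv0⟩
  have dMA' : dist M A' = t/2 - t*s/6 := by
    rw [key, cM0, cM1, cA'0, cA'1, Real.sqrt_eq_cases]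
    exact Or.inl ⟨by linear_combination (1/4 - s/6 + s^2/36) * ht - (1/12) * hs, hv0⟩
  have dA'C : dist A' C = s/3 := by
    rw [key, cA'0, cA'1, cC0, cC1, Real.sqrt_eq_cases]
    exact Or.inl ⟨by linear_combination (1/12) * hs, by positivity⟩
  refine ⟨⟨?_, ?_, ?_⟩, ?_, ?_, ?_⟩
  · simp only [quadArea]
    rw [cA0, cA1, cC'0, cC'1, cM0, cM1, cB'0, cB'1,
      abs_of_nonneg (by nlinarith [hs, hs0])]
    linear_combination (-1/24) * hs
  · simp only [quadArea]
    rw [cB0, cB1, cA'0, cA'1, cM0, cM1, cC'0, cC'1,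
      abs_of_nonneg (by nlinarith [hs, hs0])]
    linear_combination (1/24) * hs
  · simp only [quadArea]
    rw [cC0, cC1, cB'0, cB'1, cM0, cM1, cA'0, cA'1,
      abs_of_nonneg (by nlinarith [hs, hs0])]
    linear_combination (0:ℝ) * hs
  · simp only [quadPerimeter]
    rw [dAC', dC'M, dMB', dB'A, h6]; ring
  · simp only [quadPerimeter]
    rw [dBA', dA'M, dMC', dC'B, h6]; ring
  · simp only [quadPerimeter]
    rw [dCB', dB'M, dMA', dA'C, h6]; ring
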